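/- Let $\ell_1,\ell_2,\ell_3$ be natural numbers with $\ell_1 \le \ell_2 \le \ell_3$, such that $\ell_1+\ell_2+\ell_3$ is even and $\ell_3 \le \ell_1 + \ell_2$. Then the discrete uniform random variables $\mathrm{Unif}\{0,\ldots,\ell_1\}$, $\mathrm{Unif}\{0,\ldots,\ell_2\}$, $\mathrm{Unif}\{0,\ldots,\ell_3\}$ are jointly mixable, i.e., admit a coupling with sum almost surely equal to $(\ell_1+\ell_2+\ell_3)/2$. -/

import Mathlib

open MeasureTheory

/-- The uniform distribution on `{0, 1, ..., ℓ}` as a measure on `ℕ`. -/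
noncomputable def discUnif (ℓ : ℕ) : Measure ℕ :=
  (PMF.uniformOfFinset (Finset.range (ℓ + 1)) ⟨0, by simp⟩).toMeasure

namespace JMaux

open Finset
open scoped ENNReal

lemma mset3 (s : Set (ℕ×ℕ×ℕ)) : MeasurableSet s := s.to_countable.measurableSet

/-- integer-count uniform measure on `{t, ..., t+g}` -/
noncomputable def U (t g : ℕ) : Measure ℕ := ∑ k ∈ range (g+1), Measure.dirac (t+k)

lemma map_fsum {ι α β : Type*} [MeasurableSpace α] [MeasurableSpace β]
    (s : Finset ι) (μ : ι → Measure α) {f : α → β} (hf : Measurable f) :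
    (∑ i ∈ s, μ i).map f = ∑ i ∈ s, (μ i).map f := by
  induction s using Finset.cons_induction with
  | empty => simp
  | cons a s ha ih => rw [Finset.sum_cons, Finset.sum_cons, Measure.map_add _ _ hf, ih]

lemma Ucat (t a b : ℕ) : U t a + U (t+a+1) b = U t (a+b+1) := by
  have : U t (a+b+1) = U t a + U (t+a+1) b := by
    unfold U
    rw [show a+b+1+1 = (a+1)+(b+1) by ring, Finset.sum_range_add]
    congr 1
    exact Finset.sum_congr rfl (fun k _ => by rw [show t+(a+1+k) = t+a+1+k by ring])
  exact this.symm

lemma Urev (t g : ℕ) : (∑ k ∈ range (g+1), Measure.dirac (t+(g-k))) = U t g := by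
  have h := Finset.sum_range_reflect (fun k => (Measure.dirac (t+k) : Measure ℕ)) (g+1)
  simpa [U] using h

lemma Usingle (t : ℕ) : U t 0 = Measure.dirac t := by simp [U]

lemma U_shift (t g : ℕ) : (U 0 g).map (fun x => t + x) = U t g := by
  unfold U
  rw [map_fsum _ _ (measurable_of_countable _)]
  apply Finset.sum_congr rfl
  intro k _
  rw [Measure.map_dirac' (measurable_of_countable _)]
  norm_num

lemma U_univ (t g : ℕ) : U t g Set.univ = (g+1 : ℕ) := by
  simp [U]

lemma fsum_dirac_null {ι : Type*} (s : Finset ι) (y : ι → ℕ×ℕ×ℕ) (S : Set (ℕ×ℕ×ℕ))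
    (h : ∀ i ∈ s, y i ∉ S) : (∑ i ∈ s, Measure.dirac (y i)) S = 0 := by
  have h2 : (∑ i ∈ s, Measure.dirac (y i)) S = ∑ i ∈ s, (Measure.dirac (y i)) S := by simp
  rw [h2, Finset.sum_eq_zero]
  intro i hi
  rw [Measure.dirac_apply' _ (mset3 S), Set.indicator_of_notMem (h i hi)]

lemma discUnif_eq (ℓ : ℕ) : discUnif ℓ = (((ℓ+1 : ℕ)):ℝ≥0∞)⁻¹ • U 0 ℓ := by
  ext s hs
  have hne : discUnif ℓ = (PMF.uniformOfFinset (range (ℓ+1)) (Finset.nonempty_range_iff.mpr (Nat.succ_ne_zero ℓ))).toMeasure := rfl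
  rw [hne, PMF.toMeasure_apply _ hs, Measure.smul_apply]
  have hU : U 0 ℓ s = ∑ k ∈ range (ℓ+1), s.indicator 1 k := by
    simp [U, Measure.dirac_apply' _ hs]
  rw [hU, smul_eq_mul, Finset.mul_sum, tsum_eq_sum (s := range (ℓ+1)) ?side]
  · apply Finset.sum_congr rfl
    intro k hk
    by_cases hks : k ∈ s
    · rw [Set.indicator_of_mem hks, PMF.uniformOfFinset_apply]
      simp [hk, Set.indicator_of_mem hks]
    · simp [Set.indicator_of_notMem hks]
  case side =>
    intro a ha
    by_cases has : a ∈ s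
    · simp [Set.indicator_of_mem has, PMF.uniformOfFinset_apply_of_notMem _ ha]
    · simp [Set.indicator_of_notMem has]

def CC (a b c s : ℕ) : Prop :=
  ∃ (T : Measure (ℕ×ℕ×ℕ)) (c1 c2 c3 : ℕ),
    0 < c1 ∧ 0 < c2 ∧ 0 < c3 ∧
    c1*(a+1) = c2*(b+1) ∧ c2*(b+1) = c3*(c+1) ∧
    T.map (fun x => x.1) = (c1 : ℝ≥0∞) • U 0 a ∧
    T.map (fun x => x.2.1) = (c2 : ℝ≥0∞) • U 0 b ∧
    T.map (fun x => x.2.2) = (c3 : ℝ≥0∞) • U 0 c ∧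
    T {x | x.1+x.2.1+x.2.2 ≠ s} = 0

lemma CC_shift {a b c s : ℕ} (h : CC a b c s) (t1 t2 t3 : ℕ) :
    ∃ (T : Measure (ℕ×ℕ×ℕ)) (c1 c2 c3 : ℕ),
      0 < c1 ∧ 0 < c2 ∧ 0 < c3 ∧
      c1*(a+1) = c2*(b+1) ∧ c2*(b+1) = c3*(c+1) ∧
      T.map (fun x => x.1) = (c1 : ℝ≥0∞) • U t1 a ∧
      T.map (fun x => x.2.1) = (c2 : ℝ≥0∞) • U t2 b ∧
      T.map (fun x => x.2.2) = (c3 : ℝ≥0∞) • U t3 c ∧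
      T {x | x.1+x.2.1+x.2.2 ≠ s+(t1+t2+t3)} = 0 := by
  obtain ⟨T, c1, c2, c3, h1, h2, h3, h4, h5, m1, m2, m3, hsupp⟩ := h
  refine ⟨T.map (fun x => (t1+x.1, t2+x.2.1, t3+x.2.2)), c1, c2, c3, h1, h2, h3, h4, h5, ?_, ?_, ?_, ?_⟩
  · rw [Measure.map_map (measurable_of_countable _) (measurable_of_countable _)]
    have heq : ((fun x : ℕ×ℕ×ℕ => x.1) ∘ (fun x : ℕ×ℕ×ℕ => (t1+x.1, t2+x.2.1, t3+x.2.2)))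
        = (fun y => t1 + y) ∘ (fun x : ℕ×ℕ×ℕ => x.1) := rfl
    rw [heq, ← Measure.map_map (measurable_of_countable _) (measurable_of_countable _), m1,
      Measure.map_smul, U_shift]
  · rw [Measure.map_map (measurable_of_countable _) (measurable_of_countable _)]
    have heq : ((fun x : ℕ×ℕ×ℕ => x.2.1) ∘ (fun x : ℕ×ℕ×ℕ => (t1+x.1, t2+x.2.1, t3+x.2.2)))
        = (fun y => t2 + y) ∘ (fun x : ℕ×ℕ×ℕ => x.2.1) := rfl
    rw [heq, ← Measure.map_map (measurable_of_countable _) (measurable_of_countable _), m2,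
      Measure.map_smul, U_shift]
  · rw [Measure.map_map (measurable_of_countable _) (measurable_of_countable _)]
    have heq : ((fun x : ℕ×ℕ×ℕ => x.2.2) ∘ (fun x : ℕ×ℕ×ℕ => (t1+x.1, t2+x.2.1, t3+x.2.2)))
        = (fun y => t3 + y) ∘ (fun x : ℕ×ℕ×ℕ => x.2.2) := rfl
    rw [heq, ← Measure.map_map (measurable_of_countable _) (measurable_of_countable _), m3,
      Measure.map_smul, U_shift]
  · rw [Measure.map_apply (measurable_of_countable _) (mset3 _)]
    have : (fun x : ℕ×ℕ×ℕ => (t1+x.1, t2+x.2.1, t3+x.2.2)) ⁻¹' {x | x.1+x.2.1+x.2.2 ≠ s+(t1+t2+t3)}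
        = {x : ℕ×ℕ×ℕ | x.1+x.2.1+x.2.2 ≠ s} := by
      ext x
      simp only [Set.mem_preimage, Set.mem_setOf_eq]
      omega
    rw [this, hsupp]

lemma CC_swap12 {a b c s : ℕ} (h : CC a b c s) : CC b a c s := by
  obtain ⟨T, c1, c2, c3, h1, h2, h3, h4, h5, m1, m2, m3, hsupp⟩ := h
  refine ⟨T.map (fun x => (x.2.1, x.1, x.2.2)), c2, c1, c3, h2, h1, h3, h4.symm, h4.trans h5, ?_, ?_, ?_, ?_⟩
  · rw [Measure.map_map (measurable_of_countable _) (measurable_of_countable _)]; exact m2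
  · rw [Measure.map_map (measurable_of_countable _) (measurable_of_countable _)]; exact m1
  · rw [Measure.map_map (measurable_of_countable _) (measurable_of_countable _)]; exact m3
  · rw [Measure.map_apply (measurable_of_countable _) (mset3 _)]
    have : (fun x : ℕ×ℕ×ℕ => (x.2.1, x.1, x.2.2)) ⁻¹' {x | x.1+x.2.1+x.2.2 ≠ s}
        = {x : ℕ×ℕ×ℕ | x.1+x.2.1+x.2.2 ≠ s} := by
      ext x
      simp only [Set.mem_preimage, Set.mem_setOf_eq]
      omega
    rw [this, hsupp]

lemma CC_swap23 {a b c s : ℕ} (h : CC a b c s) : CC a c b s := by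
  obtain ⟨T, c1, c2, c3, h1, h2, h3, h4, h5, m1, m2, m3, hsupp⟩ := h
  refine ⟨T.map (fun x => (x.1, x.2.2, x.2.1)), c1, c3, c2, h1, h3, h2, h4.trans h5, h5.symm, ?_, ?_, ?_, ?_⟩
  · rw [Measure.map_map (measurable_of_countable _) (measurable_of_countable _)]; exact m1
  · rw [Measure.map_map (measurable_of_countable _) (measurable_of_countable _)]; exact m3
  · rw [Measure.map_map (measurable_of_countable _) (measurable_of_countable _)]; exact m2
  · rw [Measure.map_apply (measurable_of_countable _) (mset3 _)]
    have : (fun x : ℕ×ℕ×ℕ => (x.1, x.2.2, x.2.1)) ⁻¹' {x | x.1+x.2.1+x.2.2 ≠ s}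
        = {x : ℕ×ℕ×ℕ | x.1+x.2.1+x.2.2 ≠ s} := by
      ext x
      simp only [Set.mem_preimage, Set.mem_setOf_eq]
      omega
    rw [this, hsupp]


lemma map5 {α β : Type*} [MeasurableSpace α] [MeasurableSpace β]
    (x1 x2 x3 x4 x5 : ℝ≥0∞) (μ1 μ2 μ3 μ4 μ5 : Measure α) {f : α → β} (hf : Measurable f) :
    (x1•μ1 + x2•μ2 + x3•μ3 + x4•μ4 + x5•μ5).map f
      = x1•(μ1.map f) + x2•(μ2.map f) + x3•(μ3.map f) + x4•(μ4.map f) + x5•(μ5.map f) := by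
  simp only [Measure.map_add _ _ hf, Measure.map_smul]

lemma pack {g1 g2 g3 s' : ℕ} (t1 t2 t3 w : ℕ)
    (h : 0 < w → CC g1 g2 g3 s') :
    ∃ (T : Measure (ℕ×ℕ×ℕ)) (d1 d2 d3 N : ℕ), 0 < N ∧
      (0 < w → (d1*(g1+1) = N ∧ d2*(g2+1) = N ∧ d3*(g3+1) = N)) ∧
      T.map (fun x => x.1) = (d1:ℝ≥0∞) • U t1 g1 ∧
      T.map (fun x => x.2.1) = (d2:ℝ≥0∞) • U t2 g2 ∧
      T.map (fun x => x.2.2) = (d3:ℝ≥0∞) • U t3 g3 ∧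
      T {x | x.1+x.2.1+x.2.2 ≠ s'+(t1+t2+t3)} = 0 := by
  rcases Nat.eq_zero_or_pos w with hw|hw
  · refine ⟨0, 0, 0, 0, 1, one_pos, by omega, ?_, ?_, ?_, ?_⟩ <;> simp
  · obtain ⟨T, d1, d2, d3, p1, p2, p3, e1, e2, m1, m2, m3, hsupp⟩ := CC_shift (h hw) t1 t2 t3
    exact ⟨T, d1, d2, d3, d1*(g1+1), by positivity, fun _ => ⟨rfl, e1.symm, (e1.trans e2).symm⟩,
      m1, m2, m3, hsupp⟩

lemma caseA (b : ℕ) : CC 0 b b b := by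
  refine ⟨∑ k ∈ range (b+1), Measure.dirac ((0, k, b-k) : ℕ×ℕ×ℕ), b+1, 1, 1,
    by omega, one_pos, one_pos, by ring, by ring, ?_, ?_, ?_, ?_⟩
  · rw [map_fsum _ _ (measurable_of_countable _)]
    simp only [Measure.map_dirac' (measurable_of_countable _)]
    simp [U, Finset.sum_const, ← Nat.cast_smul_eq_nsmul (R := ℝ≥0∞) (M := Measure ℕ)]
  · rw [map_fsum _ _ (measurable_of_countable _)]
    simp only [Measure.map_dirac' (measurable_of_countable _)]
    simp [U]
  · rw [map_fsum _ _ (measurable_of_countable _)]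
    simp only [Measure.map_dirac' (measurable_of_countable _)]
    rw [show (∑ k ∈ range (b+1), Measure.dirac (((0:ℕ), k, b-k) : ℕ×ℕ×ℕ).2.2)
         = ∑ k ∈ range (b+1), Measure.dirac (0+(b-k)) by norm_num]
    rw [Urev]
    simp
  · apply fsum_dirac_null
    intro i hi
    have hib := Finset.mem_range.mp hi
    simp only [Set.mem_setOf_eq]
    omega

set_option maxHeartbeats 1000000 in
lemma caseC3 (tot m e b d : ℕ)
    (IH : ∀ a' b' c' s', a'+b'+c' < tot → 2*s' = a'+b'+c' →
          a' ≤ b'+c' → b' ≤ a'+c' → c' ≤ a'+b' → CC a' b' c' s')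
    (htot : (2*m+e+1)+b+(d+2) ≤ tot)
    (hd : b+e = d+1) (hab : 2*m+e+1 ≤ b) : CC (2*m+e+1) b (d+2) (m+d+2) := by
  obtain ⟨w2, hw2⟩ : ∃ w2, b = 2*m+1+w2 := ⟨b-(2*m+1), by omega⟩
  obtain ⟨w0, hw0⟩ : ∃ w0, w0 + (d+2) = (d+3)*(m+1) := by
    have h1 : d+3 ≤ (d+3)*(m+1) := Nat.le_mul_of_pos_right _ (by omega)
    exact ⟨(d+3)*(m+1) - (d+2), by omega⟩
  -- sub0 : (a, b, d) at shift (0,0,1), target m+d+1, weight always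
  obtain ⟨T0, c10, c20, c30, N0, hN0, hrel0, m01, m02, m03, hs0⟩ :=
    pack (g1 := 2*m+e+1) (g2 := b) (g3 := d) (s' := m+d+1) 0 0 1 1
      (fun _ => IH _ _ _ _ (by omega) (by omega) (by omega) (by omega) (by omega))
  obtain ⟨hrel01, hrel02, hrel03⟩ := hrel0 one_pos
  -- sub1 : (e-1, b, d) at shift (m+1, 0, 1), target d, weight e
  obtain ⟨T1, c11, c21, c31, N1, hN1, hrel1, m11, m12, m13, hs1⟩ :=
    pack (g1 := e-1) (g2 := b) (g3 := d) (s' := d) (m+1) 0 1 e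
      (fun he => IH _ _ _ _ (by omega) (by omega) (by omega) (by omega) (by omega))
  -- sub2 : (a, w2-1, d) at shift (0, m+1, 1), target d, weight w2
  obtain ⟨T2, c12, c22, c32, N2, hN2, hrel2, m21, m22, m23, hs2⟩ :=
    pack (g1 := 2*m+e+1) (g2 := w2-1) (g3 := d) (s' := d) 0 (m+1) 1 w2
      (fun hw => IH _ _ _ _ (by omega) (by omega) (by omega) (by omega) (by omega))
  set P : ℕ := N0*(N1*N2) with hP
  have hPpos : 0 < P := by positivity
  set k0 : ℕ := w0*(N1*N2) with hk0
  set k1 : ℕ := e*(N0*N2) with hk1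
  set k2 : ℕ := w2*(N0*N1) with hk2
  set A1 : Measure (ℕ×ℕ×ℕ) := ∑ k ∈ range (m+1), Measure.dirac ((k, m-k, d+2) : ℕ×ℕ×ℕ) with hA1
  set A2 : Measure (ℕ×ℕ×ℕ) :=
    ∑ k ∈ range (m+1), Measure.dirac ((m+e+1+(m-k), m+w2+1+k, 0) : ℕ×ℕ×ℕ) with hA2
  set T : Measure (ℕ×ℕ×ℕ) :=
    (P : ℝ≥0∞) • A1 + (P : ℝ≥0∞) • A2 + (k0 : ℝ≥0∞) • T0 + (k1 : ℝ≥0∞) • T1 + (k2 : ℝ≥0∞) • T2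
    with hT
  -- marginals of A1, A2
  have hA1m1 : A1.map (fun x => x.1) = U 0 m := by
    rw [hA1, map_fsum _ _ (measurable_of_countable _)]
    simp only [Measure.map_dirac' (measurable_of_countable _)]
    simp [U]
  have hA1m2 : A1.map (fun x => x.2.1) = U 0 m := by
    rw [hA1, map_fsum _ _ (measurable_of_countable _)]
    simp only [Measure.map_dirac' (measurable_of_countable _)]
    rw [show (∑ k ∈ range (m+1), Measure.dirac (((k, m-k, d+2) : ℕ×ℕ×ℕ)).2.1)
         = ∑ k ∈ range (m+1), Measure.dirac (0+(m-k)) by norm_num]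
    exact Urev 0 m
  have hA1m3 : A1.map (fun x => x.2.2) = ((m+1 : ℕ) : ℝ≥0∞) • U (d+2) 0 := by
    rw [hA1, map_fsum _ _ (measurable_of_countable _)]
    simp only [Measure.map_dirac' (measurable_of_countable _)]
    simp [Usingle, Finset.sum_const, ← Nat.cast_smul_eq_nsmul (R := ℝ≥0∞) (M := Measure ℕ)]
  have hA2m1 : A2.map (fun x => x.1) = U (m+e+1) m := by
    rw [hA2, map_fsum _ _ (measurable_of_countable _)]
    simp only [Measure.map_dirac' (measurable_of_countable _)]
    exact Urev (m+e+1) m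
  have hA2m2 : A2.map (fun x => x.2.1) = U (m+w2+1) m := by
    rw [hA2, map_fsum _ _ (measurable_of_countable _)]
    simp only [Measure.map_dirac' (measurable_of_countable _)]
    rfl
  have hA2m3 : A2.map (fun x => x.2.2) = ((m+1 : ℕ) : ℝ≥0∞) • U 0 0 := by
    rw [hA2, map_fsum _ _ (measurable_of_countable _)]
    simp only [Measure.map_dirac' (measurable_of_countable _)]
    simp [Usingle, Finset.sum_const, ← Nat.cast_smul_eq_nsmul (R := ℝ≥0∞) (M := Measure ℕ)]
  -- marginal 1
  have hm1 : T.map (fun x => x.1)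
      = ((P + (k0*c10 + k2*c12) : ℕ) : ℝ≥0∞) • U 0 (2*m+e+1) := by
    rw [hT, map5 _ _ _ _ _ _ _ _ _ _ (measurable_of_countable _), hA1m1, hA2m1, m01, m11, m21]
    rcases Nat.eq_zero_or_pos e with rfl|he
    · have hcat : U 0 m + U (m+0+1) m = U 0 (2*m+0+1) := by
        have h2 := Ucat 0 m m
        simp only [Nat.zero_add] at h2
        rw [show m+m+1 = 2*m+0+1 by ring] at h2
        rw [show m+0+1 = m+1 by ring]
        exact h2
      rw [← hcat, hk1]
      push_cast
      module
    · have he1 : e - 1 + 1 = e := by omega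
      obtain ⟨hrel11, hrel12, hrel13⟩ := hrel1 he
      have hcc : k1 * c11 = P := by
        rw [hk1, hP, ← hrel11, he1]; ring
      have hcat : U 0 m + (U (m+1) (e-1) + U (m+e+1) m) = U 0 (2*m+e+1) := by
        have h1 := Ucat (m+1) (e-1) m
        rw [show m+1+(e-1)+1 = m+e+1 by omega] at h1
        rw [h1]
        have h2 := Ucat 0 m (e-1+(m+1))
        simp only [Nat.zero_add] at h2
        rw [show m+(e-1+(m+1))+1 = 2*m+e+1 by omega] at h2
        rw [show e-1+m+1 = e-1+(m+1) by ring]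
        exact h2
      have hsm : (k1:ℝ≥0∞) • ((c11:ℝ≥0∞) • U (m+1) (e-1)) = (P:ℝ≥0∞) • U (m+1) (e-1) := by
        rw [smul_smul, ← Nat.cast_mul, hcc]
      rw [hsm, ← hcat]
      push_cast
      module
  -- marginal 2
  have hm2 : T.map (fun x => x.2.1)
      = ((P + (k0*c20 + k1*c21) : ℕ) : ℝ≥0∞) • U 0 b := by
    rw [hT, map5 _ _ _ _ _ _ _ _ _ _ (measurable_of_countable _), hA1m2, hA2m2, m02, m12, m22]
    rcases Nat.eq_zero_or_pos w2 with rfl|hw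
    · have hcat : U 0 m + U (m+0+1) m = U 0 b := by
        have h2 := Ucat 0 m m
        simp only [Nat.zero_add] at h2
        rw [show m+m+1 = b by omega] at h2
        rw [show m+0+1 = m+1 by ring]
        exact h2
      rw [← hcat, hk2]
      push_cast
      module
    · have hw1 : w2 - 1 + 1 = w2 := by omega
      obtain ⟨hrel21, hrel22, hrel23⟩ := hrel2 hw
      have hcc : k2 * c22 = P := by
        rw [hk2, hP, ← hrel22, hw1]; ring
      have hcat : U 0 m + (U (m+1) (w2-1) + U (m+w2+1) m) = U 0 b := by
        have h1 := Ucat (m+1) (w2-1) m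
        rw [show m+1+(w2-1)+1 = m+w2+1 by omega] at h1
        rw [h1]
        have h2 := Ucat 0 m (w2-1+(m+1))
        simp only [Nat.zero_add] at h2
        rw [show m+(w2-1+(m+1))+1 = b by omega] at h2
        rw [show w2-1+m+1 = w2-1+(m+1) by ring]
        exact h2
      have hsm : (k2:ℝ≥0∞) • ((c22:ℝ≥0∞) • U (m+1) (w2-1)) = (P:ℝ≥0∞) • U (m+1) (w2-1) := by
        rw [smul_smul, ← Nat.cast_mul, hcc]
      rw [hsm, ← hcat]
      push_cast
      module
  -- coefficient fact for marginal 3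
  have hw123 : w0 + e + w2 = (m+1)*(d+1) := by
    have hq : (d+3)*(m+1) = (m+1)*(d+1) + 2*(m+1) := by ring
    generalize hQ : (m+1)*(d+1) = Q at hq ⊢
    generalize hPP : (d+3)*(m+1) = PP at hq hw0
    omega
  have hk3 : k0*c30 + (k1*c31 + k2*c32) = (m+1)*P := by
    have e0 : k0*c30*(d+1) = w0*P := by rw [hk0, hP, ← hrel03]; ring
    have e1 : k1*c31*(d+1) = e*P := by
      rcases Nat.eq_zero_or_pos e with rfl|he
      · simp [hk1]
      · rw [hk1, hP, ← (hrel1 he).2.2]; ring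
    have e2 : k2*c32*(d+1) = w2*P := by
      rcases Nat.eq_zero_or_pos w2 with rfl|hw
      · simp [hk2]
      · rw [hk2, hP, ← (hrel2 hw).2.2]; ring
    have hmul : (k0*c30 + (k1*c31 + k2*c32))*(d+1) = ((m+1)*P)*(d+1) := by
      calc (k0*c30 + (k1*c31 + k2*c32))*(d+1)
          = k0*c30*(d+1) + (k1*c31*(d+1) + k2*c32*(d+1)) := by ring
        _ = w0*P + (e*P + w2*P) := by rw [e0, e1, e2]
        _ = (w0+e+w2)*P := by ring
        _ = ((m+1)*(d+1))*P := by rw [hw123]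
        _ = ((m+1)*P)*(d+1) := by ring
    exact Nat.eq_of_mul_eq_mul_right (by omega) hmul
  -- marginal 3
  have hm3 : T.map (fun x => x.2.2) = (((m+1)*P : ℕ) : ℝ≥0∞) • U 0 (d+2) := by
    rw [hT, map5 _ _ _ _ _ _ _ _ _ _ (measurable_of_countable _), hA1m3, hA2m3, m03, m13, m23]
    have hcat : U 0 0 + U 1 d + U (d+2) 0 = U 0 (d+2) := by
      have h1 := Ucat 0 0 d
      simp only [Nat.zero_add] at h1
      have h2 := Ucat 0 (d+1) 0
      simp only [Nat.zero_add] at h2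
      rw [show d+1+1 = d+2 by ring, show d+1+0+1 = d+2 by ring] at h2
      rw [h1, h2]
    trans ((((m+1)*P : ℕ)):ℝ≥0∞)•U (d+2) 0 + ((((m+1)*P : ℕ)):ℝ≥0∞)•U 0 0
      + (((k0*c30 + (k1*c31 + k2*c32) : ℕ)):ℝ≥0∞)•U 1 d
    · push_cast
      module
    · rw [hk3, ← hcat]
      push_cast
      module
  -- consistency
  have u10 : k0*(c10*(2*m+e+1+1)) = w0*P := by rw [hk0, hP, ← hrel01]; ring
  have u12 : k2*(c12*(2*m+e+1+1)) = w2*P := by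
    rcases Nat.eq_zero_or_pos w2 with rfl|hw
    · simp [hk2]
    · rw [hk2, hP, ← (hrel2 hw).1]; ring
  have u20 : k0*(c20*(b+1)) = w0*P := by rw [hk0, hP, ← hrel02]; ring
  have u21 : k1*(c21*(b+1)) = e*P := by
    rcases Nat.eq_zero_or_pos e with rfl|he
    · simp [hk1]
    · rw [hk1, hP, ← (hrel1 he).2.1]; ring
  have hcons1 : (P + (k0*c10 + k2*c12))*((2*m+e+1)+1) = (P + (k0*c20 + k1*c21))*(b+1) := by
    have lhs : (P + (k0*c10 + k2*c12))*((2*m+e+1)+1)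
        = P*(2*m+e+1+1) + (k0*(c10*(2*m+e+1+1)) + k2*(c12*(2*m+e+1+1))) := by ring
    have rhs : (P + (k0*c20 + k1*c21))*(b+1)
        = P*(b+1) + (k0*(c20*(b+1)) + k1*(c21*(b+1))) := by ring
    rw [lhs, rhs, u10, u12, u20, u21]
    have key : 2*m+e+1+1+w2 = b+1+e := by omega
    calc P*(2*m+e+1+1) + (w0*P + w2*P) = P*(2*m+e+1+1+w2) + w0*P := by ring
      _ = P*(b+1+e) + w0*P := by rw [key]
      _ = P*(b+1) + (w0*P + e*P) := by ring
  have hcons2 : (P + (k0*c20 + k1*c21))*(b+1) = ((m+1)*P)*((d+2)+1) := by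
    have rhs : (P + (k0*c20 + k1*c21))*(b+1)
        = P*(b+1) + (k0*(c20*(b+1)) + k1*(c21*(b+1))) := by ring
    rw [rhs, u20, u21]
    have key2 : (b+1)+w0+e = (d+3)*(m+1) := by
      generalize hPP : (d+3)*(m+1) = PP at hw0 ⊢
      omega
    calc P*(b+1) + (w0*P + e*P) = P*((b+1)+w0+e) := by ring
      _ = P*((d+3)*(m+1)) := by rw [key2]
      _ = ((m+1)*P)*((d+2)+1) := by ring
  -- support
  have hsupp : T {x : ℕ×ℕ×ℕ | x.1+x.2.1+x.2.2 ≠ m+d+2} = 0 := by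
    have z1 : A1 {x : ℕ×ℕ×ℕ | x.1+x.2.1+x.2.2 ≠ m+d+2} = 0 := by
      rw [hA1]; apply fsum_dirac_null; intro i hi
      have hib := Finset.mem_range.mp hi
      simp only [Set.mem_setOf_eq]
      omega
    have z2 : A2 {x : ℕ×ℕ×ℕ | x.1+x.2.1+x.2.2 ≠ m+d+2} = 0 := by
      rw [hA2]; apply fsum_dirac_null; intro i hi
      have hib := Finset.mem_range.mp hi
      simp only [Set.mem_setOf_eq]
      omega
    rw [show m+d+2 = m+d+1+(0+0+1) by ring] at z1 z2 ⊢
    have hs1' : T1 {x : ℕ×ℕ×ℕ | x.1+x.2.1+x.2.2 ≠ m+d+1+(0+0+1)} = 0 := by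
      rw [show m+d+1+(0+0+1) = d+(m+1+0+1) by ring]
      exact hs1
    have hs2' : T2 {x : ℕ×ℕ×ℕ | x.1+x.2.1+x.2.2 ≠ m+d+1+(0+0+1)} = 0 := by
      rw [show m+d+1+(0+0+1) = d+(0+(m+1)+1) by ring]
      exact hs2
    rw [hT]
    simp only [Measure.add_apply, Measure.smul_apply, smul_eq_mul]
    rw [z1, z2, hs0, hs1', hs2']
    simp
  exact ⟨T, P + (k0*c10 + k2*c12), P + (k0*c20 + k1*c21), (m+1)*P,
    by omega, by omega, by positivity, hcons1, hcons2, hm1, hm2, hm3,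
    by rw [show m+d+2 = m+d+1+(0+0+1) by ring] at hsupp; rw [show m+d+1+(0+0+1) = m+d+2 by ring] at hsupp; exact hsupp⟩

set_option maxHeartbeats 1000000 in
lemma caseC4 (tot m p : ℕ)
    (IH : ∀ a' b' c' s', a'+b'+c' < tot → 2*s' = a'+b'+c' →
          a' ≤ b'+c' → b' ≤ a'+c' → c' ≤ a'+b' → CC a' b' c' s')
    (htot : (2*m+2)+(m+1+p)+(m+1+p) ≤ tot)
    (hmp : m+1 ≤ p) : CC (2*m+2) (m+1+p) (m+1+p) (2*m+p+2) := by
  obtain ⟨w0, hw0⟩ : ∃ w0, w0 + 2*((m+1+p)+1) = (2*m+3)*(p+1) := by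
    have key : (2*m+3)*(p+1) = (2*m+1)*p + (2*p+2*m+3) := by ring
    have h1 : 1*1 ≤ (2*m+1)*p := Nat.mul_le_mul (by omega) (by omega)
    generalize hR : (2*m+1)*p = R at key h1
    generalize hPP : (2*m+3)*(p+1) = PP at key ⊢
    exact ⟨R - 1, by omega⟩
  -- sub0 : (2m, b, b) at shift (1,0,0), target 2m+p+1
  obtain ⟨T0, c10, c20, c30, N0, hN0, hrel0, m01, m02, m03, hs0⟩ :=
    pack (g1 := 2*m) (g2 := m+1+p) (g3 := m+1+p) (s' := 2*m+p+1) 1 0 0 1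
      (fun _ => IH _ _ _ _ (by omega) (by omega) (by omega) (by omega) (by omega))
  obtain ⟨hrel01, hrel02, hrel03⟩ := hrel0 one_pos
  -- sub1 : (2m, m, m) at shift (1, 0, p+1), target 2m
  obtain ⟨T1, c11, c21, c31, N1, hN1, hrel1, m11, m12, m13, hs1⟩ :=
    pack (g1 := 2*m) (g2 := m) (g3 := m) (s' := 2*m) 1 0 (p+1) 1
      (fun _ => IH _ _ _ _ (by omega) (by omega) (by omega) (by omega) (by omega))
  obtain ⟨hrel11, hrel12, hrel13⟩ := hrel1 one_pos
  -- sub2 : (2m, m, m) at shift (1, p+1, 0), target 2m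
  obtain ⟨T2, c12, c22, c32, N2, hN2, hrel2, m21, m22, m23, hs2⟩ :=
    pack (g1 := 2*m) (g2 := m) (g3 := m) (s' := 2*m) 1 (p+1) 0 1
      (fun _ => IH _ _ _ _ (by omega) (by omega) (by omega) (by omega) (by omega))
  obtain ⟨hrel21, hrel22, hrel23⟩ := hrel2 one_pos
  set P : ℕ := N0*(N1*N2) with hP
  have hPpos : 0 < P := by positivity
  set k0 : ℕ := w0*(N1*N2) with hk0
  set k1 : ℕ := (m+1)*(N0*N2) with hk1
  set k2 : ℕ := (m+1)*(N0*N1) with hk2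
  set A1 : Measure (ℕ×ℕ×ℕ) :=
    ∑ k ∈ range (p+1), Measure.dirac ((0, m+1+k, m+1+(p-k)) : ℕ×ℕ×ℕ) with hA1
  set A2 : Measure (ℕ×ℕ×ℕ) :=
    ∑ k ∈ range (p+1), Measure.dirac ((2*m+2, k, p-k) : ℕ×ℕ×ℕ) with hA2
  set T : Measure (ℕ×ℕ×ℕ) :=
    (P : ℝ≥0∞) • A1 + (P : ℝ≥0∞) • A2 + (k0 : ℝ≥0∞) • T0 + (k1 : ℝ≥0∞) • T1 + (k2 : ℝ≥0∞) • T2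
    with hT
  have hA1m1 : A1.map (fun x => x.1) = ((p+1 : ℕ) : ℝ≥0∞) • U 0 0 := by
    rw [hA1, map_fsum _ _ (measurable_of_countable _)]
    simp only [Measure.map_dirac' (measurable_of_countable _)]
    simp [Usingle, Finset.sum_const, ← Nat.cast_smul_eq_nsmul (R := ℝ≥0∞) (M := Measure ℕ)]
  have hA1m2 : A1.map (fun x => x.2.1) = U (m+1) p := by
    rw [hA1, map_fsum _ _ (measurable_of_countable _)]
    simp only [Measure.map_dirac' (measurable_of_countable _)]
    rfl
  have hA1m3 : A1.map (fun x => x.2.2) = U (m+1) p := by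
    rw [hA1, map_fsum _ _ (measurable_of_countable _)]
    simp only [Measure.map_dirac' (measurable_of_countable _)]
    exact Urev (m+1) p
  have hA2m1 : A2.map (fun x => x.1) = ((p+1 : ℕ) : ℝ≥0∞) • U (2*m+2) 0 := by
    rw [hA2, map_fsum _ _ (measurable_of_countable _)]
    simp only [Measure.map_dirac' (measurable_of_countable _)]
    simp [Usingle, Finset.sum_const, ← Nat.cast_smul_eq_nsmul (R := ℝ≥0∞) (M := Measure ℕ)]
  have hA2m2 : A2.map (fun x => x.2.1) = U 0 p := by
    rw [hA2, map_fsum _ _ (measurable_of_countable _)]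
    simp only [Measure.map_dirac' (measurable_of_countable _)]
    simp [U]
  have hA2m3 : A2.map (fun x => x.2.2) = U 0 p := by
    rw [hA2, map_fsum _ _ (measurable_of_countable _)]
    simp only [Measure.map_dirac' (measurable_of_countable _)]
    rw [show (∑ k ∈ range (p+1), Measure.dirac (((2*m+2, k, p-k) : ℕ×ℕ×ℕ)).2.2)
         = ∑ k ∈ range (p+1), Measure.dirac (0+(p-k)) by norm_num]
    exact Urev 0 p
  -- coefficient fact for marginal 1
  have hc1 : k0*c10 + (k1*c11 + k2*c12) = (p+1)*P := by
    have e0 : k0*c10*(2*m+1) = w0*P := by rw [hk0, hP, ← hrel01]; ring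
    have e1 : k1*c11*(2*m+1) = (m+1)*P := by rw [hk1, hP, ← hrel11]; ring
    have e2 : k2*c12*(2*m+1) = (m+1)*P := by rw [hk2, hP, ← hrel21]; ring
    have hw123 : w0 + ((m+1) + (m+1)) = (p+1)*(2*m+1) := by
      have key : (2*m+3)*(p+1) = (p+1)*(2*m+1) + 2*(p+1) := by ring
      generalize hQ : (p+1)*(2*m+1) = Q at key ⊢
      generalize hPP : (2*m+3)*(p+1) = PP at key hw0
      omega
    have hmul : (k0*c10 + (k1*c11 + k2*c12))*(2*m+1) = ((p+1)*P)*(2*m+1) := by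
      calc (k0*c10 + (k1*c11 + k2*c12))*(2*m+1)
          = k0*c10*(2*m+1) + (k1*c11*(2*m+1) + k2*c12*(2*m+1)) := by ring
        _ = w0*P + ((m+1)*P + (m+1)*P) := by rw [e0, e1, e2]
        _ = (w0 + ((m+1)+(m+1)))*P := by ring
        _ = ((p+1)*(2*m+1))*P := by rw [hw123]
        _ = ((p+1)*P)*(2*m+1) := by ring
    exact Nat.eq_of_mul_eq_mul_right (by omega) hmul
  -- marginal 1
  have hm1 : T.map (fun x => x.1) = (((p+1)*P : ℕ) : ℝ≥0∞) • U 0 (2*m+2) := by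
    rw [hT, map5 _ _ _ _ _ _ _ _ _ _ (measurable_of_countable _), hA1m1, hA2m1, m01, m11, m21]
    have hcat : U 0 0 + U 1 (2*m) + U (2*m+2) 0 = U 0 (2*m+2) := by
      have h1 := Ucat 0 0 (2*m)
      simp only [Nat.zero_add] at h1
      have h2 := Ucat 0 (2*m+1) 0
      simp only [Nat.zero_add] at h2
      rw [show 2*m+1+1 = 2*m+2 by ring, show 2*m+1+0+1 = 2*m+2 by ring] at h2
      rw [show 2*m+1 = 2*m+1 by rfl] at h1
      rw [h1, h2]
    trans (((p+1)*P : ℕ):ℝ≥0∞)•U 0 0 + (((p+1)*P : ℕ):ℝ≥0∞)•U (2*m+2) 0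
      + (((k0*c10 + (k1*c11 + k2*c12) : ℕ)):ℝ≥0∞)•U 1 (2*m)
    · push_cast
      module
    · rw [hc1, ← hcat]
      push_cast
      module
  -- marginal 2
  have u21 : k1*c21 = P := by rw [hk1, hP, ← hrel12]; ring
  have u22 : k2*c22 = P := by rw [hk2, hP, ← hrel22]; ring
  have hm2 : T.map (fun x => x.2.1)
      = ((2*P + k0*c20 : ℕ) : ℝ≥0∞) • U 0 (m+1+p) := by
    rw [hT, map5 _ _ _ _ _ _ _ _ _ _ (measurable_of_countable _), hA1m2, hA2m2, m02, m12, m22]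
    have hcatA : U 0 m + U (m+1) p = U 0 (m+1+p) := by
      have h1 := Ucat 0 m p
      simp only [Nat.zero_add] at h1
      rw [show m+p+1 = m+1+p by ring] at h1
      exact h1
    have hcatB : U 0 p + U (p+1) m = U 0 (m+1+p) := by
      have h1 := Ucat 0 p m
      simp only [Nat.zero_add] at h1
      rw [show p+m+1 = m+1+p by ring] at h1
      exact h1
    trans (P:ℝ≥0∞)•(U 0 m + U (m+1) p) + (P:ℝ≥0∞)•(U 0 p + U (p+1) m)
      + ((k0*c20 : ℕ):ℝ≥0∞)•U 0 (m+1+p)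
    · have hs1' : (k1:ℝ≥0∞)•((c21:ℝ≥0∞)•U 0 m) = (P:ℝ≥0∞)•U 0 m := by
        rw [smul_smul, ← Nat.cast_mul, u21]
      have hs2' : (k2:ℝ≥0∞)•((c22:ℝ≥0∞)•U (p+1) m) = (P:ℝ≥0∞)•U (p+1) m := by
        rw [smul_smul, ← Nat.cast_mul, u22]
      rw [hs1', hs2']
      push_cast
      module
    · rw [hcatA, hcatB]
      push_cast
      module
  -- marginal 3
  have u31 : k1*c31 = P := by rw [hk1, hP, ← hrel13]; ring
  have u32 : k2*c32 = P := by rw [hk2, hP, ← hrel23]; ring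
  have hm3 : T.map (fun x => x.2.2)
      = ((2*P + k0*c30 : ℕ) : ℝ≥0∞) • U 0 (m+1+p) := by
    rw [hT, map5 _ _ _ _ _ _ _ _ _ _ (measurable_of_countable _), hA1m3, hA2m3, m03, m13, m23]
    have hcatA : U 0 m + U (m+1) p = U 0 (m+1+p) := by
      have h1 := Ucat 0 m p
      simp only [Nat.zero_add] at h1
      rw [show m+p+1 = m+1+p by ring] at h1
      exact h1
    have hcatB : U 0 p + U (p+1) m = U 0 (m+1+p) := by
      have h1 := Ucat 0 p m
      simp only [Nat.zero_add] at h1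
      rw [show p+m+1 = m+1+p by ring] at h1
      exact h1
    trans (P:ℝ≥0∞)•(U 0 m + U (m+1) p) + (P:ℝ≥0∞)•(U 0 p + U (p+1) m)
      + ((k0*c30 : ℕ):ℝ≥0∞)•U 0 (m+1+p)
    · have hs1' : (k1:ℝ≥0∞)•((c31:ℝ≥0∞)•U (p+1) m) = (P:ℝ≥0∞)•U (p+1) m := by
        rw [smul_smul, ← Nat.cast_mul, u31]
      have hs2' : (k2:ℝ≥0∞)•((c32:ℝ≥0∞)•U 0 m) = (P:ℝ≥0∞)•U 0 m := by
        rw [smul_smul, ← Nat.cast_mul, u32]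
      rw [hs1', hs2']
      push_cast
      module
    · rw [hcatA, hcatB]
      push_cast
      module
  -- consistency
  have u20 : k0*(c20*((m+1+p)+1)) = w0*P := by rw [hk0, hP, ← hrel02]; ring
  have u30 : k0*(c30*((m+1+p)+1)) = w0*P := by rw [hk0, hP, ← hrel03]; ring
  have hbw : 2*((m+1+p)+1) + w0 = (2*m+3)*(p+1) := by omega
  have hcons1 : ((p+1)*P)*((2*m+2)+1) = (2*P + k0*c20)*((m+1+p)+1) := by
    have rhs : (2*P + k0*c20)*((m+1+p)+1)
        = P*(2*((m+1+p)+1)) + k0*(c20*((m+1+p)+1)) := by ring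
    rw [rhs, u20]
    calc ((p+1)*P)*((2*m+2)+1) = P*((2*m+3)*(p+1)) := by ring
      _ = P*(2*((m+1+p)+1)) + w0*P := by rw [← hbw]; ring
  have hcons2 : (2*P + k0*c20)*((m+1+p)+1) = (2*P + k0*c30)*((m+1+p)+1) := by
    have l1 : (2*P + k0*c20)*((m+1+p)+1)
        = P*(2*((m+1+p)+1)) + k0*(c20*((m+1+p)+1)) := by ring
    have l2 : (2*P + k0*c30)*((m+1+p)+1)
        = P*(2*((m+1+p)+1)) + k0*(c30*((m+1+p)+1)) := by ring
    rw [l1, l2, u20, u30]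
  -- support
  have hsupp : T {x : ℕ×ℕ×ℕ | x.1+x.2.1+x.2.2 ≠ 2*m+p+2} = 0 := by
    have z1 : A1 {x : ℕ×ℕ×ℕ | x.1+x.2.1+x.2.2 ≠ 2*m+p+2} = 0 := by
      rw [hA1]; apply fsum_dirac_null; intro i hi
      have hib := Finset.mem_range.mp hi
      simp only [Set.mem_setOf_eq]
      omega
    have z2 : A2 {x : ℕ×ℕ×ℕ | x.1+x.2.1+x.2.2 ≠ 2*m+p+2} = 0 := by
      rw [hA2]; apply fsum_dirac_null; intro i hi
      have hib := Finset.mem_range.mp hi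
      simp only [Set.mem_setOf_eq]
      omega
    have hs0' : T0 {x : ℕ×ℕ×ℕ | x.1+x.2.1+x.2.2 ≠ 2*m+p+2} = 0 := by
      rw [show 2*m+p+2 = 2*m+p+1+(1+0+0) by ring]
      exact hs0
    have hs1' : T1 {x : ℕ×ℕ×ℕ | x.1+x.2.1+x.2.2 ≠ 2*m+p+2} = 0 := by
      rw [show 2*m+p+2 = 2*m+(1+0+(p+1)) by ring]
      exact hs1
    have hs2' : T2 {x : ℕ×ℕ×ℕ | x.1+x.2.1+x.2.2 ≠ 2*m+p+2} = 0 := by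
      rw [show 2*m+p+2 = 2*m+(1+(p+1)+0) by ring]
      exact hs2
    rw [hT]
    simp only [Measure.add_apply, Measure.smul_apply, smul_eq_mul]
    rw [z1, z2, hs0', hs1', hs2']
    simp
  exact ⟨T, (p+1)*P, 2*P + k0*c20, 2*P + k0*c30,
    by positivity, by omega, by omega, hcons1, hcons2, hm1, hm2, hm3, hsupp⟩

lemma CC_sorted (tot a b c s : ℕ)
    (IH : ∀ a' b' c' s', a'+b'+c' < tot → 2*s' = a'+b'+c' →
          a' ≤ b'+c' → b' ≤ a'+c' → c' ≤ a'+b' → CC a' b' c' s')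
    (htot : a+b+c ≤ tot) (hs : 2*s = a+b+c) (hab : a ≤ b) (hbc : b ≤ c) (hca : c ≤ a+b) :
    CC a b c s := by
  rcases Nat.eq_zero_or_pos a with rfl|ha
  · have h1 : c = b := by omega
    have h2 : s = b := by omega
    rw [h1, h2]
    exact caseA b
  rcases Nat.lt_or_ge b c with hlt|hge
  · obtain ⟨m, e, d, h1, h2, h3⟩ : ∃ m e d, a = 2*m+e+1 ∧ c = d+2 ∧ b+e = d+1 :=
      ⟨(a+b-c)/2, c-b-1, c-2, by omega, by omega, by omega⟩
    subst h1
    subst h2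
    obtain rfl : s = m+d+2 := by omega
    exact caseC3 tot m e b d IH (by omega) h3 (by omega)
  · obtain rfl : c = b := le_antisymm hge hbc
    obtain ⟨m, p, h1, h2⟩ : ∃ m p, a = 2*m+2 ∧ c = m+1+p :=
      ⟨a/2-1, c-(a/2), by omega, by omega⟩
    subst h1
    subst h2
    obtain rfl : s = 2*m+p+2 := by omega
    exact caseC4 tot m p IH (by omega) (by omega)

lemma CC_all (a b c s : ℕ) (hs : 2*s = a+b+c)
    (h1 : a ≤ b+c) (h2 : b ≤ a+c) (h3 : c ≤ a+b) : CC a b c s := by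
  suffices H : ∀ n a b c s, a+b+c ≤ n → 2*s = a+b+c → a ≤ b+c → b ≤ a+c → c ≤ a+b →
      CC a b c s from H (a+b+c) a b c s le_rfl hs h1 h2 h3
  intro n
  induction n using Nat.strong_induction_on with
  | _ n IHn =>
    intro a b c s hn hs h1 h2 h3
    have IH : ∀ a' b' c' s', a'+b'+c' < a+b+c → 2*s' = a'+b'+c' →
        a' ≤ b'+c' → b' ≤ a'+c' → c' ≤ a'+b' → CC a' b' c' s' := by
      intro a' b' c' s' hlt
      exact IHn (a'+b'+c') (by omega) a' b' c' s' le_rfl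
    rcases le_total a b with hab|hab <;> rcases le_total b c with hbc|hbc <;>
      rcases le_total a c with hac|hac
    · exact CC_sorted (a+b+c) a b c s IH le_rfl hs hab hbc (by omega)
    · exact CC_sorted (a+b+c) a b c s IH le_rfl hs hab (by omega) (by omega)
    · exact CC_swap23 (CC_sorted (a+b+c) a c b s IH (by omega) (by omega) hac (by omega)
        (by omega))
    · exact CC_swap23 (CC_swap12 (CC_sorted (a+b+c) c a b s IH (by omega) (by omega)
        (by omega) (by omega) (by omega)))
    · exact CC_swap12 (CC_sorted (a+b+c) b a c s IH (by omega) (by omega) (by omega)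
        (by omega) (by omega))
    · exact CC_swap12 (CC_swap23 (CC_sorted (a+b+c) b c a s IH (by omega) (by omega)
        (by omega) (by omega) (by omega)))
    · exact CC_swap12 (CC_swap23 (CC_sorted (a+b+c) b c a s IH (by omega) (by omega)
        (by omega) (by omega) (by omega)))
    · exact CC_swap23 (CC_swap12 (CC_swap23 (CC_sorted (a+b+c) c b a s IH (by omega)
        (by omega) (by omega) (by omega) (by omega))))

lemma inv_helper (x y : ℝ≥0∞) (h0 : x ≠ 0) (ht : x ≠ ⊤) : (x * y)⁻¹ * x = y⁻¹ := by
  rw [ENNReal.mul_inv (Or.inl h0) (Or.inl ht), mul_comm, ← mul_assoc,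
    ENNReal.mul_inv_cancel h0 ht, one_mul]

end JMaux

open scoped ENNReal

theorem stmt_14 (ℓ₁ ℓ₂ ℓ₃ : ℕ) (hle : ℓ₁ ≤ ℓ₂) (hle' : ℓ₂ ≤ ℓ₃)
    (heven : Even (ℓ₁ + ℓ₂ + ℓ₃)) (hmax : ℓ₃ ≤ ℓ₁ + ℓ₂) :
    ∃ π : Measure (ℕ × ℕ × ℕ), IsProbabilityMeasure π ∧
      π.map (fun x => x.1) = discUnif ℓ₁ ∧
      π.map (fun x => x.2.1) = discUnif ℓ₂ ∧
      π.map (fun x => x.2.2) = discUnif ℓ₃ ∧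
      (∀ᵐ x ∂π, x.1 + x.2.1 + x.2.2 = (ℓ₁ + ℓ₂ + ℓ₃) / 2) := by
  classical
  obtain ⟨t, ht⟩ := heven
  have hs2 : 2*((ℓ₁+ℓ₂+ℓ₃)/2) = ℓ₁+ℓ₂+ℓ₃ := by omega
  obtain ⟨T, c1, c2, c3, p1, p2, p3, e1, e2, m1, m2, m3, hsupp⟩ :=
    JMaux.CC_all ℓ₁ ℓ₂ ℓ₃ ((ℓ₁+ℓ₂+ℓ₃)/2) hs2 (by omega) (by omega) hmax
  have hT_univ : T Set.univ = ((c1*(ℓ₁+1) : ℕ) : ℝ≥0∞) := by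
    have h := congrArg (fun μ => μ Set.univ) m1
    rw [Measure.map_apply (measurable_of_countable _) MeasurableSet.univ] at h
    rw [Set.preimage_univ] at h
    rw [h, Measure.smul_apply, JMaux.U_univ, smul_eq_mul]
    push_cast
    ring
  have hc1 : ((c1 : ℝ≥0∞)) ≠ 0 := by
    simp only [ne_eq, Nat.cast_eq_zero]
    omega
  have hc1t : ((c1 : ℝ≥0∞)) ≠ ⊤ := ENNReal.natCast_ne_top c1
  have hc2 : ((c2 : ℝ≥0∞)) ≠ 0 := by
    simp only [ne_eq, Nat.cast_eq_zero]
    omega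
  have hc2t : ((c2 : ℝ≥0∞)) ≠ ⊤ := ENNReal.natCast_ne_top c2
  have hc3 : ((c3 : ℝ≥0∞)) ≠ 0 := by
    simp only [ne_eq, Nat.cast_eq_zero]
    omega
  have hc3t : ((c3 : ℝ≥0∞)) ≠ ⊤ := ENNReal.natCast_ne_top c3
  have hNe1 : ((c1*(ℓ₁+1) : ℕ) : ℝ≥0∞) = (c1 : ℝ≥0∞) * ((ℓ₁+1 : ℕ) : ℝ≥0∞) := by push_cast; ring
  have hNe2 : ((c1*(ℓ₁+1) : ℕ) : ℝ≥0∞) = (c2 : ℝ≥0∞) * ((ℓ₂+1 : ℕ) : ℝ≥0∞) := by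
    rw [e1]; push_cast; ring
  have hNe3 : ((c1*(ℓ₁+1) : ℕ) : ℝ≥0∞) = (c3 : ℝ≥0∞) * ((ℓ₃+1 : ℕ) : ℝ≥0∞) := by
    rw [e1, e2]; push_cast; ring
  refine ⟨(((c1*(ℓ₁+1) : ℕ) : ℝ≥0∞))⁻¹ • T, ⟨?_⟩, ?_, ?_, ?_, ?_⟩
  · rw [Measure.smul_apply, hT_univ, smul_eq_mul, ENNReal.inv_mul_cancel]
    · simp only [ne_eq, Nat.cast_eq_zero]
      exact Nat.mul_ne_zero (by omega) (by omega)
    · exact ENNReal.natCast_ne_top _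
  · rw [Measure.map_smul, m1, JMaux.discUnif_eq, smul_smul, hNe1,
      JMaux.inv_helper _ _ hc1 hc1t]
  · rw [Measure.map_smul, m2, JMaux.discUnif_eq, smul_smul, hNe2,
      JMaux.inv_helper _ _ hc2 hc2t]
  · rw [Measure.map_smul, m3, JMaux.discUnif_eq, smul_smul, hNe3,
      JMaux.inv_helper _ _ hc3 hc3t]
  · rw [ae_iff]
    have hset : {x : ℕ×ℕ×ℕ | ¬ x.1+x.2.1+x.2.2 = (ℓ₁+ℓ₂+ℓ₃)/2}
        = {x : ℕ×ℕ×ℕ | x.1+x.2.1+x.2.2 ≠ (ℓ₁+ℓ₂+ℓ₃)/2} := rfl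
    rw [hset, Measure.smul_apply, hsupp, smul_zero]
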